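/- Let M ∈ ℂ^{n×n} be an idempotent matrix of rank r, s = n − r, t = rank(M) − dim(null(I − MM^H)), with singular value decomposition M = 𝒰𝒮(𝒰O)^H as in the main theorem, where O = [[C, 0, ES],[0, I_{n−2t}, 0],[S, 0, −EC]] is real orthogonal, 𝒮 = diag(C^{−1}, I_{r−t}, 0_{s−t}, 0_t), and E = diag(±1, …, ±1) ∈ ℝ^{t×t}. Then, setting 𝒲 = 𝒰O(I_{n−t} ⊕ E), the matrix 𝒲 is unitary and M = 𝒲(O𝒮)𝒲^H; equivalently, O^T𝒮 = (I_{n−t} ⊕ E) N^T (I_{n−t} ⊕ E) where N = [[I_t, 0, 0, T],[0, I_{r−t}, 0, 0],[0, 0, 0_{s−t}, 0],[0, 0, 0, 0_t]] and T = C^{−1}S. -/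
import Mathlib


open Matrix

/-- The real matrix `N = [[I_t,0,0,T],[0,I_{r-t},0,0],[0,0,0_{s-t},0],[0,0,0,0_t]]`
with `T = C⁻¹ S = diag(tan ψ₁, …, tan ψ_t)` placed in the last `t` columns of the
first `t` rows. -/
noncomputable def Nmat (n r t : ℕ) (ψ : ℕ → ℝ) : Matrix (Fin n) (Fin n) ℝ :=
  Matrix.of fun i j =>
    if (i : ℕ) = (j : ℕ) ∧ (i : ℕ) < r then 1
    else if (i : ℕ) < t ∧ (j : ℕ) = n - t + (i : ℕ) then Real.tan (ψ (i : ℕ))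
    else 0

/-- The diagonal matrix `𝒮 = diag(C⁻¹, I_{r-t}, 0_{s-t}, 0_t)` with
`C = diag(cos ψ₁, …, cos ψ_t)`. -/
noncomputable def Smat (n r t : ℕ) (ψ : ℕ → ℝ) : Matrix (Fin n) (Fin n) ℝ :=
  Matrix.of fun i j =>
    if (i : ℕ) = (j : ℕ) then
      (if (i : ℕ) < t then (Real.cos (ψ (i : ℕ)))⁻¹ else if (i : ℕ) < r then 1 else 0)
    else 0

/-- The real matrix `O = [[C,0,ES],[0,I_{n-2t},0],[S,0,-EC]]` where the first `t` and
last `t` rows/columns carry the nontrivial blocks, `C = diag(cos ψ_j)`,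
`S = diag(sin ψ_j)` and `E = diag(±1)`. -/
noncomputable def Omat (n t : ℕ) (ψ E : ℕ → ℝ) : Matrix (Fin n) (Fin n) ℝ :=
  Matrix.of fun i j =>
    if (i : ℕ) < t then
      (if (j : ℕ) = (i : ℕ) then Real.cos (ψ (i : ℕ))
       else if (j : ℕ) = n - t + (i : ℕ) then E (i : ℕ) * Real.sin (ψ (i : ℕ))
       else 0)
    else if (i : ℕ) < n - t then (if (j : ℕ) = (i : ℕ) then 1 else 0)
    else
      (if (j : ℕ) = (i : ℕ) - (n - t) then Real.sin (ψ ((i : ℕ) - (n - t)))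
       else if (j : ℕ) = (i : ℕ) then -(E ((i : ℕ) - (n - t)) * Real.cos (ψ ((i : ℕ) - (n - t))))
       else 0)

/-- The block diagonal matrix `I_{n-t} ⊕ E` with `E = diag(±1) ∈ ℝ^{t×t}`. -/
noncomputable def Fmat (n t : ℕ) (E : ℕ → ℝ) : Matrix (Fin n) (Fin n) ℝ :=
  Matrix.diagonal fun i => if (i : ℕ) < n - t then 1 else E ((i : ℕ) - (n - t))

/-- The dimension of the null space of `I - M Mᴴ`. -/
noncomputable def nullityOneSubMMH {n : ℕ} (M : Matrix (Fin n) (Fin n) ℂ) : ℕ :=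
  Module.finrank ℂ (LinearMap.ker (Matrix.mulVecLin (1 - M * Mᴴ)))

namespace SVDAux

open Matrix Real

/-! ### Sum helpers -/

lemma sum_eq_sing {n : ℕ} (p : Fin n) (f : Fin n → ℝ) (hf : ∀ k, k ≠ p → f k = 0) :
    ∑ k, f k = f p :=
  Finset.sum_eq_single p (fun k _ hk => hf k hk) (fun h => absurd (Finset.mem_univ p) h)

lemma dot_single {n : ℕ} (p q : ℕ) (hp : p < n) (a b : ℝ) :
    (∑ k : Fin n, (if (k : ℕ) = p then a else 0) * (if (k : ℕ) = q then b else 0)) =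
      if p = q then a * b else 0 := by
  rcases eq_or_ne p q with rfl | h
  · rw [if_pos rfl, sum_eq_sing ⟨p, hp⟩]
    · simp
    · intro k hk
      have hkp : (k : ℕ) ≠ p := fun hh => hk (Fin.ext hh)
      rw [if_neg hkp, zero_mul]
  · rw [if_neg h]
    apply Finset.sum_eq_zero
    intro k _
    rcases eq_or_ne (k : ℕ) p with h1 | h1
    · rw [if_neg (show (k : ℕ) ≠ q from fun hq => h (h1.symm.trans hq)), mul_zero]
    · rw [if_neg h1, zero_mul]

/-! ### Row decomposition of `O` -/

def pp1 (n t i : ℕ) : ℕ := if i < n - t then i else i - (n - t)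

def pp2 (n t i : ℕ) : ℕ := if i < t then n - t + i else i

noncomputable def aa1 (n t : ℕ) (ψ : ℕ → ℝ) (i : ℕ) : ℝ :=
  if i < t then Real.cos (ψ i) else if i < n - t then 1 else Real.sin (ψ (i - (n - t)))

noncomputable def aa2 (n t : ℕ) (ψ E : ℕ → ℝ) (i : ℕ) : ℝ :=
  if i < t then E i * Real.sin (ψ i)
  else if i < n - t then 0
  else -(E (i - (n - t)) * Real.cos (ψ (i - (n - t))))

lemma pp1_lt {n t : ℕ} (i : Fin n) : pp1 n t (i : ℕ) < n := by
  have := i.isLt; unfold pp1; split <;> omega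

lemma pp2_lt {n t : ℕ} (htn : t + t ≤ n) (i : Fin n) : pp2 n t (i : ℕ) < n := by
  have := i.isLt; unfold pp2; split <;> omega

lemma Omat_eq {n : ℕ} (t : ℕ) (ψ E : ℕ → ℝ) (htn : t + t ≤ n) (i k : Fin n) :
    Omat n t ψ E i k =
      (if (k : ℕ) = pp1 n t (i : ℕ) then aa1 n t ψ (i : ℕ) else 0) +
      (if (k : ℕ) = pp2 n t (i : ℕ) then aa2 n t ψ E (i : ℕ) else 0) := by
  have hi := i.isLt
  have hk := k.isLt
  simp only [Omat, Matrix.of_apply, pp1, pp2, aa1, aa2]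
  split_ifs <;> first | (exfalso; omega) | ring

lemma mulT_apply {n : ℕ} (t : ℕ) (ψ E : ℕ → ℝ) (htn : t + t ≤ n) (i j : Fin n) :
    (Omat n t ψ E * (Omat n t ψ E)ᵀ) i j =
      (if pp1 n t (i : ℕ) = pp1 n t (j : ℕ) then aa1 n t ψ (i : ℕ) * aa1 n t ψ (j : ℕ) else 0) +
      (if pp1 n t (i : ℕ) = pp2 n t (j : ℕ) then aa1 n t ψ (i : ℕ) * aa2 n t ψ E (j : ℕ) else 0) +
      (if pp2 n t (i : ℕ) = pp1 n t (j : ℕ) then aa2 n t ψ E (i : ℕ) * aa1 n t ψ (j : ℕ) else 0) +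
      (if pp2 n t (i : ℕ) = pp2 n t (j : ℕ) then aa2 n t ψ E (i : ℕ) * aa2 n t ψ E (j : ℕ) else 0)
      := by
  rw [Matrix.mul_apply]
  have hsum : ∀ k : Fin n, Omat n t ψ E i k * (Omat n t ψ E)ᵀ k j =
      ((if (k : ℕ) = pp1 n t (i : ℕ) then aa1 n t ψ (i : ℕ) else 0) +
       (if (k : ℕ) = pp2 n t (i : ℕ) then aa2 n t ψ E (i : ℕ) else 0)) *
      ((if (k : ℕ) = pp1 n t (j : ℕ) then aa1 n t ψ (j : ℕ) else 0) +
       (if (k : ℕ) = pp2 n t (j : ℕ) then aa2 n t ψ E (j : ℕ) else 0)) := by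
    intro k
    rw [Matrix.transpose_apply, Omat_eq t ψ E htn, Omat_eq t ψ E htn]
  rw [Finset.sum_congr rfl fun k _ => hsum k]
  simp only [add_mul, mul_add, Finset.sum_add_distrib]
  rw [dot_single _ _ (pp1_lt i), dot_single _ _ (pp1_lt i),
    dot_single _ _ (pp2_lt htn i), dot_single _ _ (pp2_lt htn i)]
  ring

lemma Omat_mul_transpose_self {n : ℕ} (t : ℕ) (ψ E : ℕ → ℝ) (htn : t + t ≤ n)
    (hE : ∀ k, k < t → E k = 1 ∨ E k = -1) :
    Omat n t ψ E * (Omat n t ψ E)ᵀ = 1 := by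
  have hE2 : ∀ m, m < t → E m * E m = 1 := by
    intro m hm; rcases hE m hm with h | h <;> rw [h] <;> norm_num
  ext i j
  rw [mulT_apply t ψ E htn]
  have hi := i.isLt
  have hj := j.isLt
  rcases eq_or_ne i j with rfl | hij
  · rw [Matrix.one_apply_eq]
    rcases Nat.lt_or_ge (i : ℕ) t with hi1 | hi1
    · rw [show pp1 n t (i : ℕ) = (i : ℕ) from if_pos (by omega),
        show pp2 n t (i : ℕ) = n - t + (i : ℕ) from if_pos hi1,
        show aa1 n t ψ (i : ℕ) = Real.cos (ψ (i : ℕ)) from if_pos hi1,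
        show aa2 n t ψ E (i : ℕ) = E (i : ℕ) * Real.sin (ψ (i : ℕ)) from if_pos hi1,
        if_pos rfl, if_pos rfl, if_neg (by omega), if_neg (by omega)]
      linear_combination Real.sin_sq_add_cos_sq (ψ (i : ℕ)) +
        Real.sin (ψ (i : ℕ)) * Real.sin (ψ (i : ℕ)) * hE2 (i : ℕ) hi1
    · rcases Nat.lt_or_ge (i : ℕ) (n - t) with hi2 | hi2
      · rw [show pp1 n t (i : ℕ) = (i : ℕ) from if_pos hi2,
          show pp2 n t (i : ℕ) = (i : ℕ) from if_neg (by omega),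
          show aa1 n t ψ (i : ℕ) = 1 from by unfold aa1; rw [if_neg (by omega), if_pos hi2],
          show aa2 n t ψ E (i : ℕ) = 0 from by unfold aa2; rw [if_neg (by omega), if_pos hi2],
          if_pos rfl, if_pos rfl, if_pos rfl, if_pos rfl]
        ring
      · have hit : (i : ℕ) - (n - t) < t := by omega
        rw [show pp1 n t (i : ℕ) = (i : ℕ) - (n - t) from if_neg (by omega),
          show pp2 n t (i : ℕ) = (i : ℕ) from if_neg (by omega),
          show aa1 n t ψ (i : ℕ) = Real.sin (ψ ((i : ℕ) - (n - t))) from by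
            unfold aa1; rw [if_neg (by omega), if_neg (by omega)],
          show aa2 n t ψ E (i : ℕ) =
              -(E ((i : ℕ) - (n - t)) * Real.cos (ψ ((i : ℕ) - (n - t)))) from by
            unfold aa2; rw [if_neg (by omega), if_neg (by omega)],
          if_pos rfl, if_pos rfl, if_neg (by omega), if_neg (by omega)]
        linear_combination Real.sin_sq_add_cos_sq (ψ ((i : ℕ) - (n - t))) +
          Real.cos (ψ ((i : ℕ) - (n - t))) * Real.cos (ψ ((i : ℕ) - (n - t))) *
            hE2 ((i : ℕ) - (n - t)) hit
  · rw [Matrix.one_apply_ne hij]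
    have hij' : (i : ℕ) ≠ (j : ℕ) := fun h => hij (Fin.ext h)
    rcases Nat.lt_or_ge (i : ℕ) t with hi1 | hi1
    · rcases Nat.lt_or_ge (j : ℕ) t with hj1 | hj1
      · -- low-low
        rw [show pp1 n t (i : ℕ) = (i : ℕ) from if_pos (by omega),
          show pp1 n t (j : ℕ) = (j : ℕ) from if_pos (by omega),
          show pp2 n t (i : ℕ) = n - t + (i : ℕ) from if_pos hi1,
          show pp2 n t (j : ℕ) = n - t + (j : ℕ) from if_pos hj1]
        split_ifs <;> first | (exfalso; omega) | ring
      · rcases Nat.lt_or_ge (j : ℕ) (n - t) with hj2 | hj2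
        · -- low-mid
          rw [show pp1 n t (i : ℕ) = (i : ℕ) from if_pos (by omega),
            show pp1 n t (j : ℕ) = (j : ℕ) from if_pos hj2,
            show pp2 n t (i : ℕ) = n - t + (i : ℕ) from if_pos hi1,
            show pp2 n t (j : ℕ) = (j : ℕ) from if_neg (by omega)]
          split_ifs <;> first | (exfalso; omega) | ring
        · -- low-high
          rw [show pp1 n t (i : ℕ) = (i : ℕ) from if_pos (by omega),
            show pp1 n t (j : ℕ) = (j : ℕ) - (n - t) from if_neg (by omega),
            show pp2 n t (i : ℕ) = n - t + (i : ℕ) from if_pos hi1,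
            show pp2 n t (j : ℕ) = (j : ℕ) from if_neg (by omega),
            show aa1 n t ψ (i : ℕ) = Real.cos (ψ (i : ℕ)) from if_pos hi1,
            show aa1 n t ψ (j : ℕ) = Real.sin (ψ ((j : ℕ) - (n - t))) from by
              unfold aa1; rw [if_neg (by omega), if_neg (by omega)],
            show aa2 n t ψ E (i : ℕ) = E (i : ℕ) * Real.sin (ψ (i : ℕ)) from if_pos hi1,
            show aa2 n t ψ E (j : ℕ) =
                -(E ((j : ℕ) - (n - t)) * Real.cos (ψ ((j : ℕ) - (n - t)))) from by
              unfold aa2; rw [if_neg (by omega), if_neg (by omega)]]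
          by_cases hc : (j : ℕ) = n - t + (i : ℕ)
          · rw [show (j : ℕ) - (n - t) = (i : ℕ) by omega, if_pos rfl, if_neg (by omega),
              if_neg (by omega), if_pos (by omega)]
            linear_combination (-(Real.sin (ψ (i : ℕ)) * Real.cos (ψ (i : ℕ)))) *
              hE2 (i : ℕ) hi1
          · split_ifs <;> first | (exfalso; omega) | ring
    · rcases Nat.lt_or_ge (i : ℕ) (n - t) with hi2 | hi2
      · rcases Nat.lt_or_ge (j : ℕ) t with hj1 | hj1
        · -- mid-low
          rw [show pp1 n t (i : ℕ) = (i : ℕ) from if_pos hi2,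
            show pp1 n t (j : ℕ) = (j : ℕ) from if_pos (by omega),
            show pp2 n t (i : ℕ) = (i : ℕ) from if_neg (by omega),
            show pp2 n t (j : ℕ) = n - t + (j : ℕ) from if_pos hj1]
          split_ifs <;> first | (exfalso; omega) | ring
        · rcases Nat.lt_or_ge (j : ℕ) (n - t) with hj2 | hj2
          · -- mid-mid
            rw [show pp1 n t (i : ℕ) = (i : ℕ) from if_pos hi2,
              show pp1 n t (j : ℕ) = (j : ℕ) from if_pos hj2,
              show pp2 n t (i : ℕ) = (i : ℕ) from if_neg (by omega),
              show pp2 n t (j : ℕ) = (j : ℕ) from if_neg (by omega)]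
            split_ifs <;> first | (exfalso; omega) | ring
          · -- mid-high
            rw [show pp1 n t (i : ℕ) = (i : ℕ) from if_pos hi2,
              show pp1 n t (j : ℕ) = (j : ℕ) - (n - t) from if_neg (by omega),
              show pp2 n t (i : ℕ) = (i : ℕ) from if_neg (by omega),
              show pp2 n t (j : ℕ) = (j : ℕ) from if_neg (by omega)]
            split_ifs <;> first | (exfalso; omega) | ring
      · rcases Nat.lt_or_ge (j : ℕ) t with hj1 | hj1
        · -- high-low
          rw [show pp1 n t (i : ℕ) = (i : ℕ) - (n - t) from if_neg (by omega),
            show pp1 n t (j : ℕ) = (j : ℕ) from if_pos (by omega),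
            show pp2 n t (i : ℕ) = (i : ℕ) from if_neg (by omega),
            show pp2 n t (j : ℕ) = n - t + (j : ℕ) from if_pos hj1,
            show aa1 n t ψ (i : ℕ) = Real.sin (ψ ((i : ℕ) - (n - t))) from by
              unfold aa1; rw [if_neg (by omega), if_neg (by omega)],
            show aa1 n t ψ (j : ℕ) = Real.cos (ψ (j : ℕ)) from if_pos hj1,
            show aa2 n t ψ E (i : ℕ) =
                -(E ((i : ℕ) - (n - t)) * Real.cos (ψ ((i : ℕ) - (n - t)))) from by
              unfold aa2; rw [if_neg (by omega), if_neg (by omega)],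
            show aa2 n t ψ E (j : ℕ) = E (j : ℕ) * Real.sin (ψ (j : ℕ)) from if_pos hj1]
          by_cases hc : (i : ℕ) = n - t + (j : ℕ)
          · rw [show (i : ℕ) - (n - t) = (j : ℕ) by omega, if_pos rfl, if_neg (by omega),
              if_neg (by omega), if_pos (by omega)]
            linear_combination (-(Real.sin (ψ (j : ℕ)) * Real.cos (ψ (j : ℕ)))) *
              hE2 (j : ℕ) hj1
          · split_ifs <;> first | (exfalso; omega) | ring
        · rcases Nat.lt_or_ge (j : ℕ) (n - t) with hj2 | hj2
          · -- high-mid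
            rw [show pp1 n t (i : ℕ) = (i : ℕ) - (n - t) from if_neg (by omega),
              show pp1 n t (j : ℕ) = (j : ℕ) from if_pos hj2,
              show pp2 n t (i : ℕ) = (i : ℕ) from if_neg (by omega),
              show pp2 n t (j : ℕ) = (j : ℕ) from if_neg (by omega)]
            split_ifs <;> first | (exfalso; omega) | ring
          · -- high-high
            rw [show pp1 n t (i : ℕ) = (i : ℕ) - (n - t) from if_neg (by omega),
              show pp1 n t (j : ℕ) = (j : ℕ) - (n - t) from if_neg (by omega),
              show pp2 n t (i : ℕ) = (i : ℕ) from if_neg (by omega),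
              show pp2 n t (j : ℕ) = (j : ℕ) from if_neg (by omega)]
            split_ifs <;> first | (exfalso; omega) | ring

/-! ### Multiplication by the diagonal matrix `Smat` -/

lemma mul_Smat_apply {n : ℕ} (r t : ℕ) (ψ : ℕ → ℝ) (A : Matrix (Fin n) (Fin n) ℝ) (i j : Fin n) :
    (A * Smat n r t ψ) i j = A i j *
      (if (j : ℕ) < t then (Real.cos (ψ (j : ℕ)))⁻¹ else if (j : ℕ) < r then 1 else 0) := by
  rw [Matrix.mul_apply, sum_eq_sing j]
  · simp only [Smat, Matrix.of_apply, if_true]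
  · intro k hk
    have hkj : (k : ℕ) ≠ (j : ℕ) := fun hh => hk (Fin.ext hh)
    simp only [Smat, Matrix.of_apply]
    rw [if_neg hkj, mul_zero]

lemma Omat_mul_Smat {n : ℕ} (r t : ℕ) (ψ E : ℕ → ℝ) (htn : t + t ≤ n) (htr : t ≤ r)
    (hrn : r + t ≤ n) (hψ : ∀ k, k < t → 0 < ψ k ∧ ψ k < Real.pi / 2) :
    Omat n t ψ E * Smat n r t ψ = (Nmat n r t ψ)ᵀ := by
  have hcos : ∀ m, m < t → Real.cos (ψ m) ≠ 0 := fun m hm =>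
    (Real.cos_pos_of_mem_Ioo ⟨by linarith [(hψ m hm).1, Real.pi_pos], (hψ m hm).2⟩).ne'
  ext i j
  rw [mul_Smat_apply, Matrix.transpose_apply]
  have hi := i.isLt
  have hj := j.isLt
  simp only [Omat, Nmat, Matrix.of_apply]
  rcases Nat.lt_or_ge (i : ℕ) t with hi1 | hi1
  · rw [if_pos hi1]
    by_cases h1 : (j : ℕ) = (i : ℕ)
    · rw [if_pos h1, if_pos (show (j : ℕ) < t by omega),
        if_pos (show (j : ℕ) = (i : ℕ) ∧ (j : ℕ) < r from ⟨h1, by omega⟩), h1,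
        mul_inv_cancel₀ (hcos _ hi1)]
    · rw [if_neg h1]
      by_cases h2 : (j : ℕ) = n - t + (i : ℕ)
      · rw [if_pos h2, if_neg (show ¬ (j : ℕ) < t by omega),
          if_neg (show ¬ (j : ℕ) < r by omega),
          if_neg (show ¬ ((j : ℕ) = (i : ℕ) ∧ (j : ℕ) < r) by omega),
          if_neg (show ¬ ((j : ℕ) < t ∧ (i : ℕ) = n - t + (j : ℕ)) by omega), mul_zero]
      · rw [if_neg h2, zero_mul,
          if_neg (show ¬ ((j : ℕ) = (i : ℕ) ∧ (j : ℕ) < r) by omega),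
          if_neg (show ¬ ((j : ℕ) < t ∧ (i : ℕ) = n - t + (j : ℕ)) by omega)]
  · rw [if_neg (show ¬ (i : ℕ) < t by omega)]
    rcases Nat.lt_or_ge (i : ℕ) (n - t) with hi2 | hi2
    · rw [if_pos hi2]
      by_cases h1 : (j : ℕ) = (i : ℕ)
      · rw [if_pos h1, if_neg (show ¬ (j : ℕ) < t by omega)]
        by_cases h2 : (j : ℕ) < r
        · rw [if_pos h2, if_pos (show (j : ℕ) = (i : ℕ) ∧ (j : ℕ) < r from ⟨h1, h2⟩), one_mul]
        · rw [if_neg h2, mul_zero,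
            if_neg (show ¬ ((j : ℕ) = (i : ℕ) ∧ (j : ℕ) < r) by omega),
            if_neg (show ¬ ((j : ℕ) < t ∧ (i : ℕ) = n - t + (j : ℕ)) by omega)]
      · rw [if_neg h1, zero_mul,
          if_neg (show ¬ ((j : ℕ) = (i : ℕ) ∧ (j : ℕ) < r) by omega),
          if_neg (show ¬ ((j : ℕ) < t ∧ (i : ℕ) = n - t + (j : ℕ)) by omega)]
    · rw [if_neg (show ¬ (i : ℕ) < n - t by omega)]
      by_cases h1 : (j : ℕ) = (i : ℕ) - (n - t)
      · rw [if_pos h1, if_pos (show (j : ℕ) < t by omega),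
          if_neg (show ¬ ((j : ℕ) = (i : ℕ) ∧ (j : ℕ) < r) by omega),
          if_pos (show (j : ℕ) < t ∧ (i : ℕ) = n - t + (j : ℕ) from ⟨by omega, by omega⟩),
          show (i : ℕ) - (n - t) = (j : ℕ) from h1.symm,
          Real.tan_eq_sin_div_cos, div_eq_mul_inv]
      · rw [if_neg h1]
        by_cases h2 : (j : ℕ) = (i : ℕ)
        · rw [if_pos h2, if_neg (show ¬ (j : ℕ) < t by omega),
            if_neg (show ¬ (j : ℕ) < r by omega), mul_zero,
            if_neg (show ¬ ((j : ℕ) = (i : ℕ) ∧ (j : ℕ) < r) by omega),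
            if_neg (show ¬ ((j : ℕ) < t ∧ (i : ℕ) = n - t + (j : ℕ)) by omega)]
        · rw [if_neg h2, zero_mul,
            if_neg (show ¬ ((j : ℕ) = (i : ℕ) ∧ (j : ℕ) < r) by omega),
            if_neg (show ¬ ((j : ℕ) < t ∧ (i : ℕ) = n - t + (j : ℕ)) by omega)]

lemma conj3 {n : ℕ} (r t : ℕ) (ψ E : ℕ → ℝ) (htn : t + t ≤ n) (htr : t ≤ r)
    (hrn : r + t ≤ n) (hψ : ∀ k, k < t → 0 < ψ k ∧ ψ k < Real.pi / 2) :
    (Omat n t ψ E)ᵀ * Smat n r t ψ = Fmat n t E * (Nmat n r t ψ)ᵀ * Fmat n t E := by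
  have hcos : ∀ m, m < t → Real.cos (ψ m) ≠ 0 := fun m hm =>
    (Real.cos_pos_of_mem_Ioo ⟨by linarith [(hψ m hm).1, Real.pi_pos], (hψ m hm).2⟩).ne'
  ext i j
  rw [mul_Smat_apply]
  simp only [Fmat]
  rw [Matrix.mul_diagonal, Matrix.diagonal_mul, Matrix.transpose_apply, Matrix.transpose_apply]
  have hi := i.isLt
  have hj := j.isLt
  simp only [Omat, Nmat, Matrix.of_apply]
  rcases Nat.lt_or_ge (j : ℕ) t with hj1 | hj1
  · rw [if_pos hj1]
    by_cases h1 : (i : ℕ) = (j : ℕ)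
    · rw [if_pos h1, if_pos hj1, if_pos (show (i : ℕ) < n - t by omega),
        if_pos (show (j : ℕ) = (i : ℕ) ∧ (j : ℕ) < r from ⟨h1.symm, by omega⟩),
        if_pos (show (j : ℕ) < n - t by omega), mul_inv_cancel₀ (hcos _ hj1)]
      norm_num
    · rw [if_neg h1]
      by_cases h2 : (i : ℕ) = n - t + (j : ℕ)
      · rw [if_pos h2, if_pos hj1, if_neg (show ¬ (i : ℕ) < n - t by omega),
          if_neg (show ¬ ((j : ℕ) = (i : ℕ) ∧ (j : ℕ) < r) by omega),
          if_pos (show (j : ℕ) < t ∧ (i : ℕ) = n - t + (j : ℕ) from ⟨hj1, h2⟩),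
          if_pos (show (j : ℕ) < n - t by omega),
          show (i : ℕ) - (n - t) = (j : ℕ) by omega,
          Real.tan_eq_sin_div_cos, div_eq_mul_inv]
        ring
      · rw [if_neg h2, zero_mul,
          if_neg (show ¬ ((j : ℕ) = (i : ℕ) ∧ (j : ℕ) < r) by omega),
          if_neg (show ¬ ((j : ℕ) < t ∧ (i : ℕ) = n - t + (j : ℕ)) by omega),
          mul_zero, zero_mul]
  · rcases Nat.lt_or_ge (j : ℕ) (n - t) with hj2 | hj2
    · rw [if_neg (show ¬ (j : ℕ) < t by omega), if_pos hj2,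
        if_neg (show ¬ (j : ℕ) < t by omega)]
      by_cases h1 : (i : ℕ) = (j : ℕ)
      · rw [if_pos h1]
        by_cases h2 : (j : ℕ) < r
        · rw [if_pos h2, if_pos (show (i : ℕ) < n - t by omega),
            if_pos (show (j : ℕ) = (i : ℕ) ∧ (j : ℕ) < r from ⟨h1.symm, h2⟩),
            if_pos (show (j : ℕ) < n - t from hj2)]
          norm_num
        · rw [if_neg h2, mul_zero,
            if_neg (show ¬ ((j : ℕ) = (i : ℕ) ∧ (j : ℕ) < r) by omega),
            if_neg (show ¬ ((j : ℕ) < t ∧ (i : ℕ) = n - t + (j : ℕ)) by omega),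
            mul_zero, zero_mul]
      · rw [if_neg h1, zero_mul,
          if_neg (show ¬ ((j : ℕ) = (i : ℕ) ∧ (j : ℕ) < r) by omega),
          if_neg (show ¬ ((j : ℕ) < t ∧ (i : ℕ) = n - t + (j : ℕ)) by omega),
          mul_zero, zero_mul]
    · rw [if_neg (show ¬ (j : ℕ) < t by omega),
        if_neg (show ¬ (j : ℕ) < t by omega),
        if_neg (show ¬ (j : ℕ) < r by omega), mul_zero,
        if_neg (show ¬ ((j : ℕ) = (i : ℕ) ∧ (j : ℕ) < r) by omega),
        if_neg (show ¬ ((j : ℕ) < t ∧ (i : ℕ) = n - t + (j : ℕ)) by omega),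
        mul_zero, zero_mul]

lemma Fmat_mul_self {n : ℕ} (t : ℕ) (E : ℕ → ℝ) (hE : ∀ k, k < t → E k = 1 ∨ E k = -1) :
    Fmat n t E * Fmat n t E = 1 := by
  unfold Fmat
  rw [Matrix.diagonal_mul_diagonal]
  ext i j
  rcases eq_or_ne i j with rfl | hij
  · rw [Matrix.diagonal_apply_eq, Matrix.one_apply_eq]
    have hi := i.isLt
    by_cases h : (i : ℕ) < n - t
    · rw [if_pos h]; norm_num
    · rw [if_neg h]
      rcases hE ((i : ℕ) - (n - t)) (by omega) with h1 | h1 <;> rw [h1] <;> norm_num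
  · rw [Matrix.diagonal_apply_ne _ hij, Matrix.one_apply_ne hij]

/-! ### Map to ℂ -/

lemma mapRC_mul {n : ℕ} (A B : Matrix (Fin n) (Fin n) ℝ) :
    (A * B).map Complex.ofReal = A.map Complex.ofReal * B.map Complex.ofReal := by
  ext i j
  simp only [Matrix.map_apply, Matrix.mul_apply]
  push_cast
  rfl

lemma mapRC_one {n : ℕ} : (1 : Matrix (Fin n) (Fin n) ℝ).map Complex.ofReal = 1 := by
  ext i j
  simp [Matrix.map_apply, Matrix.one_apply, apply_ite]

lemma mapRC_conjT {n : ℕ} (A : Matrix (Fin n) (Fin n) ℝ) :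
    (A.map Complex.ofReal)ᴴ = Aᵀ.map Complex.ofReal := by
  ext i j
  simp [Matrix.conjTranspose_apply, Matrix.map_apply, Complex.conj_ofReal]

/-! ### Rank facts -/

lemma rank_add_le' {n : ℕ} (A B : Matrix (Fin n) (Fin n) ℂ) :
    (A + B).rank ≤ A.rank + B.rank := by
  have h : LinearMap.range (A + B).mulVecLin ≤
      LinearMap.range A.mulVecLin ⊔ LinearMap.range B.mulVecLin := by
    rw [Matrix.mulVecLin_add]
    rintro x ⟨y, rfl⟩
    exact Submodule.add_mem_sup ⟨y, rfl⟩ ⟨y, rfl⟩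
  calc (A + B).rank = Module.finrank ℂ (LinearMap.range (A + B).mulVecLin) := rfl
    _ ≤ Module.finrank ℂ ↥(LinearMap.range A.mulVecLin ⊔ LinearMap.range B.mulVecLin) :=
        Submodule.finrank_mono h
    _ ≤ Module.finrank ℂ (LinearMap.range A.mulVecLin) +
        Module.finrank ℂ (LinearMap.range B.mulVecLin) :=
        Submodule.finrank_add_le_finrank_add_finrank _ _
    _ = A.rank + B.rank := rfl

lemma rank_nullity' {n : ℕ} (A : Matrix (Fin n) (Fin n) ℂ) :
    A.rank + Module.finrank ℂ (LinearMap.ker A.mulVecLin) = n := by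
  have h := LinearMap.finrank_range_add_finrank_ker A.mulVecLin
  rw [Module.finrank_pi, Fintype.card_fin] at h
  exact h

section
open scoped ComplexOrder

lemma rank_conjT {n : ℕ} (A : Matrix (Fin n) (Fin n) ℂ) : Aᴴ.rank = A.rank :=
  Matrix.rank_conjTranspose A

end

lemma range_one_sub {n : ℕ} (M : Matrix (Fin n) (Fin n) ℂ) (hM : M * M = M) :
    LinearMap.range (1 - M).mulVecLin = LinearMap.ker M.mulVecLin := by
  apply le_antisymm
  · rintro x ⟨y, rfl⟩
    rw [LinearMap.mem_ker]
    simp only [Matrix.mulVecLin_apply, Matrix.mulVec_mulVec]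
    rw [show M * (1 - M) = 0 by rw [Matrix.mul_sub, Matrix.mul_one, hM, sub_self]]
    simp
  · intro x hx
    rw [LinearMap.mem_ker] at hx
    refine ⟨x, ?_⟩
    simp only [Matrix.mulVecLin_apply] at hx ⊢
    rw [Matrix.sub_mulVec, Matrix.one_mulVec, hx, sub_zero]

end SVDAux

open SVDAux

/-- Let `M` be idempotent of rank `r`, `s = n - r`,
`t = rank M - dim null(I - M Mᴴ)`, with SVD `M = 𝒰 𝒮 (𝒰 O)ᴴ` as in the main theorem.
Then `𝒲 = 𝒰 O (I_{n-t} ⊕ E)` is unitary and `M = 𝒲 (O 𝒮) 𝒲ᴴ`; equivalently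
`Oᵀ 𝒮 = (I_{n-t} ⊕ E) Nᵀ (I_{n-t} ⊕ E)`. -/
theorem svd_idempotent_alternative_form {n : ℕ}
    (M : Matrix (Fin n) (Fin n) ℂ) (hM : M * M = M)
    (r s t : ℕ) (hr : r = M.rank) (hs : s = n - r)
    (ht : t = M.rank - nullityOneSubMMH M)
    (ψ E : ℕ → ℝ)
    (hψdec : ∀ k, k + 1 < t → ψ (k + 1) ≤ ψ k)
    (hψ : ∀ k, k < t → 0 < ψ k ∧ ψ k < Real.pi / 2)
    (hE : ∀ k, k < t → E k = 1 ∨ E k = -1)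
    (U : Matrix (Fin n) (Fin n) ℂ) (hU : U ∈ Matrix.unitaryGroup (Fin n) ℂ)
    (hsvd : M = U * (Smat n r t ψ).map Complex.ofReal *
      (U * (Omat n t ψ E).map Complex.ofReal)ᴴ) :
    U * (Omat n t ψ E).map Complex.ofReal * (Fmat n t E).map Complex.ofReal ∈
        Matrix.unitaryGroup (Fin n) ℂ ∧
      M = (U * (Omat n t ψ E).map Complex.ofReal * (Fmat n t E).map Complex.ofReal) *
            ((Omat n t ψ E).map Complex.ofReal * (Smat n r t ψ).map Complex.ofReal) *
            (U * (Omat n t ψ E).map Complex.ofReal * (Fmat n t E).map Complex.ofReal)ᴴ ∧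
      (Omat n t ψ E)ᵀ * Smat n r t ψ = Fmat n t E * (Nmat n r t ψ)ᵀ * Fmat n t E := by
  -- rank bookkeeping: `t + t ≤ n`, `t ≤ r`, `r + t ≤ n`
  have hMn : M.rank ≤ n := by
    simpa using M.rank_le_card_width
  have hM1 : (1 - M).rank + M.rank = n := by
    have h1 : (1 - M).rank = Module.finrank ℂ (LinearMap.ker M.mulVecLin) := by
      have : (1 - M).rank = Module.finrank ℂ (LinearMap.range (1 - M).mulVecLin) := rfl
      rw [this, range_one_sub M hM]
    have h2 := rank_nullity' M
    omega
  have hMMH : (1 - M * Mᴴ).rank ≤ (1 - M).rank + (1 - M).rank := by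
    have hsplit : (1 : Matrix (Fin n) (Fin n) ℂ) - M * Mᴴ = (1 - M) + M * (1 - Mᴴ) := by
      noncomm_ring
    have h2 : (M * (1 - Mᴴ)).rank ≤ (1 - M).rank := by
      refine le_trans (Matrix.rank_mul_le_right M (1 - Mᴴ)) ?_
      rw [show (1 : Matrix (Fin n) (Fin n) ℂ) - Mᴴ = (1 - M)ᴴ by
        rw [Matrix.conjTranspose_sub, Matrix.conjTranspose_one]]
      rw [rank_conjT]
    calc (1 - M * Mᴴ).rank = ((1 - M) + M * (1 - Mᴴ)).rank := by rw [← hsplit]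
      _ ≤ (1 - M).rank + (M * (1 - Mᴴ)).rank := rank_add_le' _ _
      _ ≤ (1 - M).rank + (1 - M).rank := by omega
  have hnullity : nullityOneSubMMH M + (1 - M * Mᴴ).rank = n := by
    have h := rank_nullity' (1 - M * Mᴴ)
    unfold nullityOneSubMMH
    omega
  have htn : t + t ≤ n := by omega
  have htr : t ≤ r := by omega
  have hrn : r + t ≤ n := by omega
  -- real matrix identities
  have hOO : Omat n t ψ E * (Omat n t ψ E)ᵀ = 1 := Omat_mul_transpose_self t ψ E htn hE
  have hOTO : (Omat n t ψ E)ᵀ * Omat n t ψ E = 1 := mul_eq_one_comm.mp hOO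
  have hFF : Fmat n t E * Fmat n t E = 1 := Fmat_mul_self t E hE
  have hOS : Omat n t ψ E * Smat n r t ψ = (Nmat n r t ψ)ᵀ :=
    Omat_mul_Smat r t ψ E htn htr hrn hψ
  have hC3 : (Omat n t ψ E)ᵀ * Smat n r t ψ = Fmat n t E * (Nmat n r t ψ)ᵀ * Fmat n t E :=
    conj3 r t ψ E htn htr hrn hψ
  -- abbreviations
  set O := Omat n t ψ E with hOdef
  set S := Smat n r t ψ with hSdef
  set F := Fmat n t E with hFdef
  set N := Nmat n r t ψ with hNdef
  have hFT : Fᵀ = F := Matrix.diagonal_transpose _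
  have hOu : O.map Complex.ofReal ∈ Matrix.unitaryGroup (Fin n) ℂ := by
    rw [Matrix.mem_unitaryGroup_iff, Matrix.star_eq_conjTranspose, mapRC_conjT, ← mapRC_mul,
      hOO, mapRC_one]
  have hFu : F.map Complex.ofReal ∈ Matrix.unitaryGroup (Fin n) ℂ := by
    rw [Matrix.mem_unitaryGroup_iff, Matrix.star_eq_conjTranspose, mapRC_conjT, hFT, ← mapRC_mul,
      hFF, mapRC_one]
  refine ⟨mul_mem (mul_mem hU hOu) hFu, ?_, hC3⟩
  -- the key real identity
  have hNt : Nᵀ = F * (Oᵀ * S) * F := by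
    rw [hC3, show F * (F * Nᵀ * F) * F = F * F * Nᵀ * (F * F) by
      simp only [Matrix.mul_assoc], hFF, Matrix.one_mul, Matrix.mul_one]
  have hFF1 : ∀ X : Matrix (Fin n) (Fin n) ℝ, F * (F * X) = X := fun X => by
    rw [← Matrix.mul_assoc, hFF, Matrix.one_mul]
  have hkey : O * F * (O * S) * (F * Oᵀ) = S * Oᵀ := by
    rw [hOS, hNt]
    simp only [Matrix.mul_assoc]
    rw [hFF1, hFF1, ← Matrix.mul_assoc, hOO, Matrix.one_mul]
  have e1 : M = U * ((S * Oᵀ).map Complex.ofReal) * Uᴴ := by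
    rw [hsvd, Matrix.conjTranspose_mul, mapRC_conjT, mapRC_mul]
    simp only [Matrix.mul_assoc]
  have e2 : (U * O.map Complex.ofReal * F.map Complex.ofReal) *
        (O.map Complex.ofReal * S.map Complex.ofReal) *
        (U * O.map Complex.ofReal * F.map Complex.ofReal)ᴴ =
      U * ((O * F * (O * S) * (F * Oᵀ)).map Complex.ofReal) * Uᴴ := by
    rw [Matrix.conjTranspose_mul, Matrix.conjTranspose_mul, mapRC_conjT, mapRC_conjT, hFT,
      mapRC_mul, mapRC_mul, mapRC_mul, mapRC_mul, mapRC_mul]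
    simp only [Matrix.mul_assoc]
  rw [e1, e2, hkey]
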